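/- If f(x) = a(cᵀx)^p with c ∈ ℝ^n \ {0} and a ≠ 0, then for every positive integer k, ‖f^k‖_HS = ‖f^k‖_σ = |a|^k ‖c‖₂^{kp}. -/

import Mathlib

open scoped BigOperators
open MvPolynomial

/-- The Bombieri (Hilbert–Schmidt) norm of a homogeneous polynomial of degree `p`:
`‖f‖_HS² = ∑ (p!/(j₁!⋯jₙ!)) φ_j²`, where `f = ∑ (p!/(j₁!⋯jₙ!)) φ_j x^j`; equivalently,
in terms of the monomial coefficients of `f`,
`‖f‖_HS² = ∑_d (∏ᵢ (dᵢ)! / p!) (coeff d f)²`. -/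
noncomputable def bombieriNorm {n : ℕ} (p : ℕ) (f : MvPolynomial (Fin n) ℝ) : ℝ :=
  Real.sqrt (∑ d ∈ f.support,
    ((∏ i, (Nat.factorial (d i) : ℝ)) / (Nat.factorial p : ℝ)) * (f.coeff d) ^ 2)

/-- The `p`-th power of the linear form `x ↦ cᵀx`, as a polynomial. -/
noncomputable def linPow {n : ℕ} (c : Fin n → ℝ) (p : ℕ) : MvPolynomial (Fin n) ℝ :=
  (∑ i, MvPolynomial.C (c i) * MvPolynomial.X i) ^ p


/-- The spectral (sigma) norm of a polynomial: the sup of `|f(x)|` over the unit sphere. -/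
noncomputable def sigmaNorm {n : ℕ} (f : MvPolynomial (Fin n) ℝ) : ℝ :=
  sSup { r | ∃ x : EuclideanSpace ℝ (Fin n), ‖x‖ = 1 ∧
    r = |MvPolynomial.eval (fun i => x i) f| }

lemma prod_C_mul_X_pow {n : ℕ} (c : Fin n → ℝ) (k : Fin n → ℕ) :
    ∏ i, (MvPolynomial.C (c i) * MvPolynomial.X i) ^ k i =
      MvPolynomial.monomial (Finsupp.equivFunOnFinite.symm k) (∏ i, c i ^ k i) := by
  rw [MvPolynomial.monomial_eq, Finsupp.prod_fintype _ _ (fun i => pow_zero _)]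
  simp only [mul_pow, Finset.prod_mul_distrib, map_prod, map_pow,
    Finsupp.coe_equivFunOnFinite_symm]

lemma coeff_linPow {n : ℕ} (c : Fin n → ℝ) (q : ℕ) (d : Fin n →₀ ℕ) :
    MvPolynomial.coeff d (linPow c q) =
      if ∑ i, d i = q then (Nat.multinomial Finset.univ d : ℝ) * ∏ i, c i ^ d i else 0 := by
  rw [linPow, Finset.sum_pow_eq_sum_piAntidiag, MvPolynomial.coeff_sum]
  have h1 : ∀ m ∈ Finset.piAntidiag Finset.univ q,
      MvPolynomial.coeff d ((Nat.multinomial Finset.univ m : MvPolynomial (Fin n) ℝ) *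
        ∏ i, (MvPolynomial.C (c i) * MvPolynomial.X i) ^ m i) =
      if m = ⇑d then (Nat.multinomial Finset.univ m : ℝ) * ∏ i, c i ^ m i else 0 := by
    intro m _
    rw [prod_C_mul_X_pow]
    rw [← MvPolynomial.C_eq_coe_nat]
    rw [MvPolynomial.coeff_C_mul, MvPolynomial.coeff_monomial]
    have hiff : (Finsupp.equivFunOnFinite.symm m = d) ↔ (m = ⇑d) := Equiv.symm_apply_eq _
    by_cases h : m = ⇑d
    · rw [if_pos h, if_pos (hiff.2 h)]
    · rw [if_neg h, if_neg (fun hh => h (hiff.1 hh)), mul_zero]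
  rw [Finset.sum_congr rfl h1, Finset.sum_ite_eq' (Finset.piAntidiag Finset.univ q) (⇑d)
    (fun m => (Nat.multinomial Finset.univ m : ℝ) * ∏ i, c i ^ m i)]
  simp [Finset.mem_piAntidiag]


theorem bombieriNorm_pow_linPow {n p : ℕ} (a : ℝ) (c : EuclideanSpace ℝ (Fin n))
    (ha : a ≠ 0) (hc : c ≠ 0)
    (f : MvPolynomial (Fin n) ℝ)
    (hfa : f = MvPolynomial.C a * linPow (fun i => c i) p) :
    ∀ k : ℕ, 0 < k →
      bombieriNorm (k * p) (f ^ k) = |a| ^ k * ‖c‖ ^ (k * p) ∧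
      sigmaNorm (f ^ k) = |a| ^ k * ‖c‖ ^ (k * p) := by
  intro k hk
  set q := k * p with hq
  have hfk : f ^ k = MvPolynomial.C (a ^ k) * linPow (fun i => c i) q := by
    rw [hfa, mul_pow, ← map_pow, linPow, ← pow_mul, mul_comm p k, linPow]
  have hcn : ‖c‖ ≠ 0 := norm_ne_zero_iff.2 hc
  have hnormsq : ∑ i, (c i) ^ 2 = ‖c‖ ^ 2 := by
    rw [← real_inner_self_eq_norm_sq]
    rw [PiLp.inner_apply]
    simp [RCLike.inner_apply, sq]
  have hcoeff : ∀ d : Fin n →₀ ℕ, (f ^ k).coeff d =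
      if ∑ i, d i = q then a ^ k * ((Nat.multinomial Finset.univ ⇑d : ℝ) * ∏ i, c i ^ d i)
      else 0 := by
    intro d
    rw [hfk, MvPolynomial.coeff_C_mul, coeff_linPow]
    split_ifs <;> ring
  constructor
  · -- Bombieri norm
    have hsub : (f ^ k).support ⊆
        (Finset.piAntidiag Finset.univ q).map Finsupp.equivFunOnFinite.symm.toEmbedding := by
      intro d hd
      rw [MvPolynomial.mem_support_iff] at hd
      simp only [Finset.mem_map_equiv, Finset.mem_piAntidiag, Equiv.symm_symm,
        Finsupp.equivFunOnFinite_apply]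
      refine ⟨?_, fun i _ => Finset.mem_univ i⟩
      by_contra hne
      exact hd ((hcoeff d).trans (if_neg hne))
    have hsum : ∑ d ∈ (f ^ k).support,
        ((∏ i, (Nat.factorial (d i) : ℝ)) / (Nat.factorial q : ℝ)) * ((f ^ k).coeff d) ^ 2
        = (a ^ k) ^ 2 * (∑ i, (c i) ^ 2) ^ q := by
      rw [Finset.sum_subset hsub (fun d _ hd => by
        rw [MvPolynomial.notMem_support_iff] at hd
        rw [hd]; ring)]
      rw [Finset.sum_map, Finset.sum_pow_eq_sum_piAntidiag, Finset.mul_sum]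
      refine Finset.sum_congr rfl fun m hm => ?_
      obtain ⟨hmsum, -⟩ := Finset.mem_piAntidiag.1 hm
      have hmsum' : ∑ i, (Finsupp.equivFunOnFinite.symm m) i = q := by
        simpa [Finsupp.coe_equivFunOnFinite_symm] using hmsum
      rw [Equiv.coe_toEmbedding, hcoeff, if_pos hmsum']
      have hcoe : ⇑(Finsupp.equivFunOnFinite.symm m) = m := by
        ext i; exact congrFun (Finsupp.coe_equivFunOnFinite_symm m) i
      simp only [Finsupp.coe_equivFunOnFinite_symm, hcoe]
      have hfact : (∏ i, ((m i).factorial : ℝ)) * (Nat.multinomial Finset.univ m : ℝ)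
          = (Nat.factorial q : ℝ) := by
        rw [← Nat.cast_prod, ← Nat.cast_mul, Nat.multinomial_spec, hmsum]
      have hqne : ((Nat.factorial q : ℕ) : ℝ) ≠ 0 := Nat.cast_ne_zero.2 (Nat.factorial_ne_zero q)
      have hP : (∏ i, c i ^ m i) ^ 2 = ∏ i, (c i ^ 2) ^ m i := by
        rw [← Finset.prod_pow]
        exact Finset.prod_congr rfl fun i _ => by rw [← pow_mul, ← pow_mul, mul_comm]
      field_simp
      linear_combination ((Nat.multinomial Finset.univ m : ℝ) * (∏ i, c i ^ m i) ^ 2) * hfact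
        + ((Nat.multinomial Finset.univ m : ℝ) * (Nat.factorial q : ℝ)) * hP
    have h2 : (a ^ k) ^ 2 * (‖c‖ ^ 2) ^ q = (|a| ^ k * ‖c‖ ^ q) ^ 2 := by
      rw [mul_pow, ← abs_pow a k, sq_abs]; ring
    rw [bombieriNorm, hsum, hnormsq, h2, Real.sqrt_sq (by positivity)]
  · -- sigma norm
    have heval : ∀ x : EuclideanSpace ℝ (Fin n),
        MvPolynomial.eval (fun i => x i) (f ^ k) = a ^ k * (∑ i, c i * x i) ^ q := by
      intro x
      rw [hfk, linPow]
      simp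
    have hinner : ∀ x : EuclideanSpace ℝ (Fin n), ∑ i, c i * x i = inner ℝ c x := by
      intro x
      simp [PiLp.inner_apply, RCLike.inner_apply, mul_comm]
    have hgr : IsGreatest { r | ∃ x : EuclideanSpace ℝ (Fin n), ‖x‖ = 1 ∧
        r = |MvPolynomial.eval (fun i => x i) (f ^ k)| } (|a| ^ k * ‖c‖ ^ q) := by
      constructor
      · refine ⟨(‖c‖⁻¹ : ℝ) • c, ?_, ?_⟩
        · rw [norm_smul, norm_inv, norm_norm, inv_mul_cancel₀ hcn]
        · rw [heval, hinner, real_inner_smul_right, real_inner_self_eq_norm_sq,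
            show ‖c‖⁻¹ * ‖c‖ ^ 2 = ‖c‖ from by
              rw [pow_two, ← mul_assoc, inv_mul_cancel₀ hcn, one_mul],
            abs_mul, abs_pow, abs_pow, abs_norm]
      · rintro r ⟨x, hx, rfl⟩
        rw [heval, hinner, abs_mul, abs_pow, abs_pow]
        refine mul_le_mul_of_nonneg_left ?_ (pow_nonneg (abs_nonneg a) k)
        refine pow_le_pow_left₀ (abs_nonneg _) ?_ q
        calc |(inner ℝ c x : ℝ)| ≤ ‖c‖ * ‖x‖ := abs_real_inner_le_norm c x
          _ = ‖c‖ := by rw [hx, mul_one]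
    rw [sigmaNorm]
    exact hgr.csSup_eq
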